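/- Let G be a simple graph on a finite vertex set V and let k, u : V → ℕ. Define k̃, ũ : V → ℕ by k̃(v) = min{k(v), u(N[v])} and ũ(v) = min{u(v), k(v)}. Then L_{k,u}(G) = L_{k̃,ũ}(G). -/
import Mathlib

open Classical Finset

/-- The closed neighborhood `N[v]` of `v` in `G`, as a finset. -/
noncomputable def closedNbhd {V : Type*} [Fintype V] (G : SimpleGraph V) (v : V) : Finset V :=
  Finset.univ.filter (fun w => G.Adj v w ∨ w = v)

lemma mem_closedNbhd_self {V : Type*} [Fintype V] (G : SimpleGraph V) (v : V) :
    v ∈ closedNbhd G v := by simp [closedNbhd]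

/-- `f` is a `(k,u)`-dominating function of `G`. -/
def IsDomFn {V : Type*} [Fintype V] (G : SimpleGraph V) (k u f : V → ℕ) : Prop :=
  ∀ v, f v ≤ u v ∧ k v ≤ ∑ w ∈ closedNbhd G v, f w

/-- `f` is a `(k,u)`-packing function of `G`. -/
def IsPackFn {V : Type*} [Fintype V] (G : SimpleGraph V) (k u f : V → ℕ) : Prop :=
  ∀ v, f v ≤ u v ∧ ∑ w ∈ closedNbhd G v, f w ≤ k v

/-- `γ_{k,u}(G)`: minimum weight of a `(k,u)`-dominating function. -/
noncomputable def gammaKU {V : Type*} [Fintype V] (G : SimpleGraph V) (k u : V → ℕ) : ℕ :=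
  sInf {s | ∃ f, IsDomFn G k u f ∧ s = ∑ v, f v}

/-- `L_{k,u}(G)`: maximum weight of a `(k,u)`-packing function. -/
noncomputable def LKU {V : Type*} [Fintype V] (G : SimpleGraph V) (k u : V → ℕ) : ℕ :=
  sSup {s | ∃ f, IsPackFn G k u f ∧ s = ∑ v, f v}

lemma pack_iff {V : Type*} [Fintype V] (G : SimpleGraph V) (k u f : V → ℕ) :
    IsPackFn G k u f ↔
      IsPackFn G (fun v => min (k v) (∑ w ∈ closedNbhd G v, u w)) (fun v => min (u v) (k v)) f := by
  constructor
  · intro h v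
    obtain ⟨h1, h2⟩ := h v
    refine ⟨le_min h1 ?_, le_min h2 (Finset.sum_le_sum fun w _ => (h w).1)⟩
    exact le_trans (Finset.single_le_sum (fun w _ => Nat.zero_le _) (mem_closedNbhd_self G v)) h2
  · intro h v
    obtain ⟨h1, h2⟩ := h v
    exact ⟨h1.trans (min_le_left _ _), h2.trans (min_le_left _ _)⟩

/-- with `k̃(v) = min(k(v), u(N[v]))` and `ũ(v) = min(u(v), k(v))`,
`L_{k,u}(G) = L_{k̃,ũ}(G)`. -/
theorem stmt_8 {V : Type*} [Fintype V] (G : SimpleGraph V) (k u : V → ℕ) :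
    LKU G k u =
      LKU G (fun v => min (k v) (∑ w ∈ closedNbhd G v, u w)) (fun v => min (u v) (k v)) := by
  unfold LKU
  congr 1
  ext s
  simp only [Set.mem_setOf_eq]
  exact exists_congr fun f => and_congr_left' (pack_iff G k u f)
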